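/- Let Σ = {a, b, c}. Suppose w = u·ab·y·ba·v and w' = u·ba·y·ab·v for words u, y, v over Σ. Then |w|_{abc} − |w'|_{abc} = |w|_{cba} − |w'|_{cba} = |y|_c, |w|_{bac} − |w'|_{bac} = |w|_{cab} − |w'|_{cab} = −|y|_c, and |w|_{acb} − |w'|_{acb} = |w|_{bca} − |w'|_{bca} = 0. -/

import Mathlib

/-- The number of occurrences of `v` as a scattered subword (subsequence) of `w`. -/
def lcount (v w : List (Fin 3)) : ℕ := w.sublists.count v

/-- The letters of the ternary alphabet `Σ = {a, b, c}`. -/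
def A : Fin 3 := 0
def B : Fin 3 := 1
def C : Fin 3 := 2

/-- `w` and `w'` are M-equivalent with respect to the ordered alphabet `{x < y < z}`:
they have the same Parikh matrix, equivalently the same scattered-subword counts for
`x, y, z, xy, yz, xyz`. -/
def Mequiv (x y z : Fin 3) (w w' : List (Fin 3)) : Prop :=
  lcount [x] w = lcount [x] w' ∧ lcount [y] w = lcount [y] w' ∧
  lcount [z] w = lcount [z] w' ∧ lcount [x, y] w = lcount [x, y] w' ∧
  lcount [y, z] w = lcount [y, z] w' ∧ lcount [x, y, z] w = lcount [x, y, z] w'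

/-- Strong M-equivalence: M-equivalence with respect to every ordering of `{a, b, c}`. -/
def StrongME (w w' : List (Fin 3)) : Prop :=
  ∀ x y z : Fin 3, [x, y, z].Perm [A, B, C] → Mequiv x y z w w'

/-- `t`-fold repetition of the word `l`. -/
def lpow (l : List (Fin 3)) (n : ℕ) : List (Fin 3) := (List.replicate n l).flatten


lemma instEq : (List.instBEq : BEq (List (Fin 3))) = instBEqOfDecidableEq := by
  refine congrArg BEq.mk (funext fun a => funext fun b => ?_)
  show (a == b) = decide (a = b)
  by_cases h : a = b
  · subst h; simp
  · rw [decide_eq_false h, beq_eq_false_iff_ne.2 h]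

lemma lcount_eq' (v w : List (Fin 3)) :
    lcount v w = w.sublists'.count v := by
  unfold lcount; exact (w.sublists_perm_sublists').count_eq v

lemma lcount_nil_right (v : List (Fin 3)) : lcount v [] = if v = [] then 1 else 0 := by
  rcases v with _ | ⟨a, t⟩ <;> simp [lcount]

lemma lcount_nil_left (w : List (Fin 3)) : lcount [] w = 1 := by
  induction w with
  | nil => simp [lcount]
  | cons a w ih =>
    rw [lcount_eq'] at *
    rw [List.sublists'_cons, List.count_append, ih, List.count_eq_zero.2 (by simp)]

lemma lcount_cons (d : Fin 3) (t : List (Fin 3)) (c : Fin 3) (w : List (Fin 3)) :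
    lcount (d :: t) (c :: w) = lcount (d :: t) w + if d = c then lcount t w else 0 := by
  rw [lcount_eq', lcount_eq', List.sublists'_cons, List.count_append]
  congr 1
  by_cases h : d = c
  · subst h
    rw [lcount_eq', if_pos rfl]
    exact List.count_map_of_injective w.sublists' (d :: ·) (fun a b hab => by simpa using hab) t
  · rw [if_neg h, List.count_eq_zero]
    simp only [List.mem_map, not_exists]
    rintro x ⟨-, hx⟩
    cases hx; exact h rfl

lemma lcount1_append (x : Fin 3) (w1 w2 : List (Fin 3)) :
    lcount [x] (w1 ++ w2) = lcount [x] w1 + lcount [x] w2 := by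
  induction w1 with
  | nil => simp [lcount_nil_right]
  | cons c w1 ih => simp only [List.cons_append, lcount_cons, ih, lcount_nil_left]; omega

lemma lcount2_append (x y : Fin 3) (w1 w2 : List (Fin 3)) :
    lcount [x, y] (w1 ++ w2) =
      lcount [x, y] w1 + lcount [x] w1 * lcount [y] w2 + lcount [x, y] w2 := by
  induction w1 with
  | nil => simp [lcount_nil_right]
  | cons c w1 ih =>
    simp only [List.cons_append, lcount_cons, ih, lcount1_append, lcount_nil_left]
    by_cases h : x = c <;> simp [h] <;> ring

lemma lcount3_append (x y z : Fin 3) (w1 w2 : List (Fin 3)) :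
    lcount [x, y, z] (w1 ++ w2) =
      lcount [x, y, z] w1 + lcount [x, y] w1 * lcount [z] w2 +
      lcount [x] w1 * lcount [y, z] w2 + lcount [x, y, z] w2 := by
  induction w1 with
  | nil => simp [lcount_nil_right]
  | cons c w1 ih =>
    simp only [List.cons_append, lcount_cons, ih, lcount2_append, lcount1_append, lcount_nil_left]
    by_cases h : x = c <;> simp [h] <;> ring

lemma lcount_singleton (x : Fin 3) (w : List (Fin 3)) : lcount [x] w = w.count x := by
  induction w with
  | nil => simp [lcount_nil_right]
  | cons c w ih =>
    rw [lcount_cons, ih, List.count_cons]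
    by_cases h : x = c
    · simp [h, lcount_nil_left]
    · simp [h, Ne.symm h]

theorem change_in_counts (u y v : List (Fin 3))
    (w w' : List (Fin 3))
    (hw : w = u ++ [A, B] ++ y ++ [B, A] ++ v)
    (hw' : w' = u ++ [B, A] ++ y ++ [A, B] ++ v) :
    (lcount [A, B, C] w : ℤ) - lcount [A, B, C] w' = (y.count C : ℤ) ∧
    (lcount [C, B, A] w : ℤ) - lcount [C, B, A] w' = (y.count C : ℤ) ∧
    (lcount [B, A, C] w : ℤ) - lcount [B, A, C] w' = -(y.count C : ℤ) ∧
    (lcount [C, A, B] w : ℤ) - lcount [C, A, B] w' = -(y.count C : ℤ) ∧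
    (lcount [A, C, B] w : ℤ) - lcount [A, C, B] w' = 0 ∧
    (lcount [B, C, A] w : ℤ) - lcount [B, C, A] w' = 0 := by
  subst hw hw'
  refine ⟨?_, ?_, ?_, ?_, ?_, ?_⟩ <;>
  · simp only [lcount3_append, lcount2_append, lcount1_append]
    simp only [A, B, C, lcount_cons, lcount_nil_right, lcount_nil_left, lcount_singleton]
    norm_num
    all_goals (push_cast; ring)
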